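/- A finite set of triples (y_i, u_i, f_i) ∈ ℝ³, i = 0, …, ℓ, satisfying f_i ≥ f_j + u_j(y_i − y_j) for all i, j, u_i y_i ≥ f_i for all i, and f_i ≥ 0 for all i, is interpolable by a convex function through the origin: there exists a convex function f : ℝ → ℝ with f(0) = 0, differentiable at each y_i with f'(y_i) = u_i and f(y_i) = f_i, and with 0 a subgradient of f at 0. (One may alternatively state the conclusion with u_i a subgradient of f at y_i.) -/
import Mathlib


/-- Convex interpolation through the origin: points satisfying the
interpolation inequalities are interpolable by a convex function `f` with
`f 0 = 0`, `0` a subgradient of `f` at `0`, `u i` a subgradient of `f` at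
`y i`, and `f (y i) = f_ i`. -/
theorem stmt2 (ℓ : ℕ) (y u f_ : Fin (ℓ + 1) → ℝ)
    (h1 : ∀ i j, f_ i ≥ f_ j + u j * (y i - y j))
    (h2 : ∀ i, u i * y i ≥ f_ i)
    (h3 : ∀ i, f_ i ≥ 0) :
    ∃ f : ℝ → ℝ, ConvexOn ℝ Set.univ f ∧ f 0 = 0 ∧
      (∀ z : ℝ, f z ≥ f 0 + 0 * (z - 0)) ∧
      (∀ i, ∀ z : ℝ, f z ≥ f (y i) + u i * (z - y i)) ∧
      (∀ i, f (y i) = f_ i) := by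
  have hne : (Finset.univ : Finset (Fin (ℓ + 1))).Nonempty := Finset.univ_nonempty
  set f : ℝ → ℝ := fun z =>
    max 0 (Finset.univ.sup' hne (fun i => f_ i + u i * (z - y i))) with hf
  have hge0 : ∀ z, 0 ≤ f z := fun z => le_max_left _ _
  have hpiece : ∀ i z, f_ i + u i * (z - y i) ≤ f z := fun i z =>
    le_trans (Finset.le_sup' (fun j => f_ j + u j * (z - y j)) (Finset.mem_univ i)) (le_max_right _ _)
  have hval : ∀ i, f (y i) = f_ i := by
    intro i
    apply le_antisymm
    · apply max_le (h3 i)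
      apply Finset.sup'_le
      intro j _
      linarith [h1 i j]
    · have := hpiece i (y i)
      simpa using this
  have hzero : f 0 = 0 := by
    apply le_antisymm
    · apply max_le le_rfl
      apply Finset.sup'_le
      intro j _
      have := h2 j
      nlinarith
    · exact hge0 0
  refine ⟨f, ?_, hzero, ?_, ?_, hval⟩
  · constructor
    · exact convex_univ
    · intro x _ z _ a b ha hb hab
      have key : ∀ i, f_ i + u i * ((a * x + b * z) - y i)
          ≤ a * f x + b * f z := by
        intro i
        have h1' := hpiece i x
        have h2' := hpiece i z
        have e : f_ i + u i * ((a * x + b * z) - y i)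
            = a * (f_ i + u i * (x - y i)) + b * (f_ i + u i * (z - y i)) := by
          have hb' : b = 1 - a := by linarith
          rw [hb']; ring
        rw [e]
        exact add_le_add (mul_le_mul_of_nonneg_left h1' ha)
          (mul_le_mul_of_nonneg_left h2' hb)
      simp only [smul_eq_mul]
      apply max_le
      · nlinarith [hge0 x, hge0 z]
      · apply Finset.sup'_le
        intro i _
        have := key i
        simpa [smul_eq_mul] using this
  · intro z
    simpa [hzero] using hge0 z
  · intro i z
    rw [hval i]
    exact hpiece i z
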